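/- Define Φ : (0,∞)³ → ℝ⁶ by Φ(a,b,c) := ( (1, a+c, bc)/(1+a+c+bc), (ab, b, 1)/(ab+b+1) ) (each triple scaled to have coordinate sum 1). Then Φ is injective, and its image equals exactly the set {(v₁,v₂,v₃,w₁,w₂,w₃) ∈ ℝ⁶ : v₁+v₂+v₃ = 1, w₁+w₂+w₃ = 1, v₁w₁ − v₂w₂ + v₃w₃ = 0, and v₁,v₂,v₃,w₁,w₂,w₃ > 0}. -/

import Mathlib

/-- The parametrization of the totally positive part of the complete flag variety of
`SL₃(ℝ)`: `Φ(a, b, c)` records the vector `(1, a + c, bc)` normalized to coordinate sum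
`1`, followed by the vector `(ab, b, 1)` normalized to coordinate sum `1`. -/
noncomputable def tpFlagParam (a b c : ℝ) : EuclideanSpace ℝ (Fin 6) :=
  WithLp.toLp 2 ![1 / (1 + (a + c) + b * c), (a + c) / (1 + (a + c) + b * c), b * c / (1 + (a + c) + b * c),
    a * b / (a * b + b + 1), b / (a * b + b + 1), 1 / (a * b + b + 1)]

/-- `Φ` is injective on `(0, ∞)³`, and its image is exactly the set of points
`(v₁, v₂, v₃, w₁, w₂, w₃) ∈ ℝ⁶` with `v₁ + v₂ + v₃ = 1`, `w₁ + w₂ + w₃ = 1`,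
`v₁w₁ - v₂w₂ + v₃w₃ = 0`, and all six coordinates strictly positive. -/
theorem tpFlagParam_injective_and_image :
    (∀ a b c a' b' c' : ℝ, 0 < a → 0 < b → 0 < c → 0 < a' → 0 < b' → 0 < c' →
      tpFlagParam a b c = tpFlagParam a' b' c' → a = a' ∧ b = b' ∧ c = c') ∧
    {x | ∃ a b c : ℝ, 0 < a ∧ 0 < b ∧ 0 < c ∧ tpFlagParam a b c = x} =
      {x : EuclideanSpace ℝ (Fin 6) | x 0 + x 1 + x 2 = 1 ∧ x 3 + x 4 + x 5 = 1 ∧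
        x 0 * x 3 - x 1 * x 4 + x 2 * x 5 = 0 ∧ ∀ i, 0 < x i} := by
  constructor
  · intro a b c a' b' c' ha hb hc ha' hb' hc' h
    have hD : (0:ℝ) < 1 + (a + c) + b * c := by positivity
    have hD' : (0:ℝ) < 1 + (a' + c') + b' * c' := by positivity
    have hE : (0:ℝ) < a * b + b + 1 := by positivity
    have hE' : (0:ℝ) < a' * b' + b' + 1 := by positivity
    have h0 : (1:ℝ) / (1 + (a + c) + b * c) = 1 / (1 + (a' + c') + b' * c') := congrArg (fun v => v 0) h
    have h2 : b * c / (1 + (a + c) + b * c) = b' * c' / (1 + (a' + c') + b' * c') := congrArg (fun v => v 2) h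
    have h3 : a * b / (a * b + b + 1) = a' * b' / (a' * b' + b' + 1) := congrArg (fun v => v 3) h
    have h4 : b / (a * b + b + 1) = b' / (a' * b' + b' + 1) := congrArg (fun v => v 4) h
    have hEeq : a * b + b + 1 = a' * b' + b' + 1 := by
      field_simp at h3 h4
      nlinarith [h3, h4]
    have hDeq : 1 + (a + c) + b * c = 1 + (a' + c') + b' * c' := by
      field_simp at h0; linarith
    rw [hEeq] at h3 h4
    rw [hDeq] at h2
    have hb4 : b = b' := by
      field_simp at h4; exact h4
    have hab : a * b = a' * b' := by
      field_simp at h3; exact h3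
    have ha3 : a = a' := by
      rw [hb4] at hab
      exact mul_right_cancel₀ hb'.ne' hab
    have hbc : b * c = b' * c' := by
      field_simp at h2; rw [h2, mul_comm]
    have hc2 : c = c' := by
      rw [hb4] at hbc
      exact mul_left_cancel₀ hb'.ne' hbc
    exact ⟨ha3, hb4, hc2⟩
  · ext x
    simp only [Set.mem_setOf_eq]
    constructor
    · rintro ⟨a, b, c, ha, hb, hc, rfl⟩
      have hD : (0:ℝ) < 1 + (a + c) + b * c := by positivity
      have hE : (0:ℝ) < a * b + b + 1 := by positivity
      refine ⟨?_, ?_, ?_, ?_⟩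
      · show 1 / (1 + (a + c) + b * c) + (a + c) / (1 + (a + c) + b * c)
            + b * c / (1 + (a + c) + b * c) = 1
        field_simp
      · show a * b / (a * b + b + 1) + b / (a * b + b + 1) + 1 / (a * b + b + 1) = 1
        field_simp
      · show 1 / (1 + (a + c) + b * c) * (a * b / (a * b + b + 1))
            - (a + c) / (1 + (a + c) + b * c) * (b / (a * b + b + 1))
            + b * c / (1 + (a + c) + b * c) * (1 / (a * b + b + 1)) = 0
        field_simp
        ring
      · intro i
        fin_cases i
        · show (0:ℝ) < 1 / (1 + (a + c) + b * c); positivity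
        · show (0:ℝ) < (a + c) / (1 + (a + c) + b * c); positivity
        · show (0:ℝ) < b * c / (1 + (a + c) + b * c); positivity
        · show (0:ℝ) < a * b / (a * b + b + 1); positivity
        · show (0:ℝ) < b / (a * b + b + 1); positivity
        · show (0:ℝ) < 1 / (a * b + b + 1); positivity
    · rintro ⟨h1, h2, h3, hpos⟩
      have p0 := hpos 0
      have p1 := hpos 1
      have p2 := hpos 2
      have p3 := hpos 3
      have p4 := hpos 4
      have p5 := hpos 5
      refine ⟨x 3 / x 4, x 4 / x 5, x 2 * x 5 / (x 0 * x 4), by positivity, by positivity,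
        by positivity, ?_⟩
      have hac : x 3 / x 4 + x 2 * x 5 / (x 0 * x 4) = x 1 / x 0 := by
        field_simp
        linear_combination h3
      have hbc : x 4 / x 5 * (x 2 * x 5 / (x 0 * x 4)) = x 2 / x 0 := by
        field_simp
      have hab : x 3 / x 4 * (x 4 / x 5) = x 3 / x 5 := by
        field_simp
      have hD : 1 + (x 3 / x 4 + x 2 * x 5 / (x 0 * x 4)) + x 4 / x 5 * (x 2 * x 5 / (x 0 * x 4))
          = 1 / x 0 := by
        rw [hac, hbc]
        field_simp
        linarith
      have hE : x 3 / x 4 * (x 4 / x 5) + x 4 / x 5 + 1 = 1 / x 5 := by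
        rw [hab]
        field_simp
        linarith
      ext i
      fin_cases i
      · show 1 / (1 + (x 3 / x 4 + x 2 * x 5 / (x 0 * x 4))
            + x 4 / x 5 * (x 2 * x 5 / (x 0 * x 4))) = x 0
        rw [hD, one_div_one_div]
      · show (x 3 / x 4 + x 2 * x 5 / (x 0 * x 4)) / (1 + (x 3 / x 4 + x 2 * x 5 / (x 0 * x 4))
            + x 4 / x 5 * (x 2 * x 5 / (x 0 * x 4))) = x 1
        rw [hD, hac]
        field_simp
      · show x 4 / x 5 * (x 2 * x 5 / (x 0 * x 4)) / (1 + (x 3 / x 4 + x 2 * x 5 / (x 0 * x 4))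
            + x 4 / x 5 * (x 2 * x 5 / (x 0 * x 4))) = x 2
        rw [hD, hbc]
        field_simp
      · show x 3 / x 4 * (x 4 / x 5) / (x 3 / x 4 * (x 4 / x 5) + x 4 / x 5 + 1) = x 3
        rw [hE, hab]
        field_simp
      · show x 4 / x 5 / (x 3 / x 4 * (x 4 / x 5) + x 4 / x 5 + 1) = x 4
        rw [hE]
        field_simp
      · show 1 / (x 3 / x 4 * (x 4 / x 5) + x 4 / x 5 + 1) = x 5
        rw [hE, one_div_one_div]
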